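/- For every n ≥ 5, the Artin braid group B_n is not locally indicable: there exists a nontrivial finitely generated subgroup of B_n that admits no surjective homomorphism onto ℤ. -/

import Mathlib

/-- The braid relators on `n - 1` generators `σ₀, …, σ_{n-2}`:
`σᵢσⱼσᵢ⁻¹σⱼ⁻¹` for `|i - j| > 1` and `σᵢσⱼσᵢ(σⱼσᵢσⱼ)⁻¹` for `|i - j| = 1`. -/
def braidRels (n : ℕ) : Set (FreeGroup (Fin (n - 1))) :=
  {w | (∃ i j : Fin (n - 1), 1 < |(i : ℤ) - (j : ℤ)| ∧
          w = FreeGroup.of i * FreeGroup.of j *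
              (FreeGroup.of j * FreeGroup.of i)⁻¹) ∨
       (∃ i j : Fin (n - 1), |(i : ℤ) - (j : ℤ)| = 1 ∧
          w = FreeGroup.of i * FreeGroup.of j * FreeGroup.of i *
              (FreeGroup.of j * FreeGroup.of i * FreeGroup.of j)⁻¹)}

/-- The Artin braid group `B_n`, presented with generators `σ₁, …, σ_{n-1}` and
the braid relations. -/
def BraidGroup (n : ℕ) : Type := PresentedGroup (braidRels n)

instance (n : ℕ) : Group (BraidGroup n) := by
  unfold BraidGroup; infer_instance

/-! ### Auxiliary generic group-theoretic lemmas -/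

section Generic

variable {G : Type*} [Group G]

/-- A form of the braid relation: conjugation. -/
lemma braid_conj (a b : G) (h : a * b * a = b * a * b) :
    a * b * a⁻¹ = b⁻¹ * a * b := by
  calc a * b * a⁻¹ = b⁻¹ * ((b * a * b) * a⁻¹) := by group
    _ = b⁻¹ * ((a * b * a) * a⁻¹) := by rw [← h]
    _ = b⁻¹ * a * b := by group

/-- A form of the braid relation: conjugation of the inverse. -/
lemma braid_conj_inv (a b : G) (h : a * b * a = b * a * b) :
    a * b⁻¹ * a⁻¹ = b⁻¹ * a⁻¹ * b := by
  calc a * b⁻¹ * a⁻¹ = (a * b * a⁻¹)⁻¹ := by group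
    _ = (b⁻¹ * a * b)⁻¹ := by rw [braid_conj a b h]
    _ = b⁻¹ * a⁻¹ * b := by group

variable (x y z w : G)
variable (hxy : x * y * x = y * x * y) (hyz : y * z * y = z * y * z)
  (hzw : z * w * z = w * z * w)
  (hzx : z * x = x * z) (hwx : w * x = x * w) (hwy : w * y = y * w)

section
include hxy

lemma braid_e1 : (x * y * x⁻¹ * x⁻¹) * x * (x * y * x⁻¹ * x⁻¹)⁻¹ = y := by
  calc (x * y * x⁻¹ * x⁻¹) * x * (x * y * x⁻¹ * x⁻¹)⁻¹
      = x * y * x * (y⁻¹ * x⁻¹) := by group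
    _ = y * x * y * (y⁻¹ * x⁻¹) := by rw [hxy]
    _ = y := by group

end

section
include hxy hwx hwy

/-- Relation `R_u`: `u = [v, q⁻¹]`. -/
lemma rel_Ru :
    (x * y * x⁻¹ * x⁻¹) * (w * x⁻¹)⁻¹ * (x * y * x⁻¹ * x⁻¹)⁻¹ * (w * x⁻¹) = y * x⁻¹ := by
  have cwx : Commute w x := hwx
  have cwy : Commute w y := hwy
  have cwv : Commute w (x * y * x⁻¹ * x⁻¹) :=
    ((cwx.mul_right cwy).mul_right cwx.inv_right).mul_right cwx.inv_right
  have hcwv : w⁻¹ * (x * y * x⁻¹ * x⁻¹)⁻¹ = (x * y * x⁻¹ * x⁻¹)⁻¹ * w⁻¹ :=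
    (cwv.inv_left.inv_right).eq
  calc (x * y * x⁻¹ * x⁻¹) * (w * x⁻¹)⁻¹ * (x * y * x⁻¹ * x⁻¹)⁻¹ * (w * x⁻¹)
      = (x * y * x⁻¹ * x⁻¹) * x * (w⁻¹ * (x * y * x⁻¹ * x⁻¹)⁻¹) * w * x⁻¹ := by group
    _ = (x * y * x⁻¹ * x⁻¹) * x * ((x * y * x⁻¹ * x⁻¹)⁻¹ * w⁻¹) * w * x⁻¹ := by rw [hcwv]
    _ = ((x * y * x⁻¹ * x⁻¹) * x * (x * y * x⁻¹ * x⁻¹)⁻¹) * x⁻¹ := by group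
    _ = y * x⁻¹ := by rw [braid_e1 x y hxy]

/-- Relation `R_v`: `v = [q, u⁻¹]`. -/
lemma rel_Rv :
    (w * x⁻¹) * (y * x⁻¹)⁻¹ * (w * x⁻¹)⁻¹ * (y * x⁻¹) = x * y * x⁻¹ * x⁻¹ := by
  have cwx : Commute w x := hwx
  have cwy : Commute w y := hwy
  have hxw' : x * w⁻¹ = w⁻¹ * x := (cwx.symm.inv_right).eq
  have hyw' : y⁻¹ * w⁻¹ = w⁻¹ * y⁻¹ := (cwy.inv_left.inv_right).symm.eq
  calc (w * x⁻¹) * (y * x⁻¹)⁻¹ * (w * x⁻¹)⁻¹ * (y * x⁻¹)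
      = w * y⁻¹ * (x * w⁻¹) * (y * x⁻¹) := by group
    _ = w * y⁻¹ * (w⁻¹ * x) * (y * x⁻¹) := by rw [hxw']
    _ = w * (y⁻¹ * w⁻¹) * (x * y * x⁻¹) := by group
    _ = w * (w⁻¹ * y⁻¹) * (x * y * x⁻¹) := by rw [hyw']
    _ = y⁻¹ * (x * y * x) * (x⁻¹ * x⁻¹) := by group
    _ = y⁻¹ * (y * x * y) * (x⁻¹ * x⁻¹) := by rw [hxy]
    _ = x * y * x⁻¹ * x⁻¹ := by group

end

section
include hxy hyz hzx

lemma rel_core :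
    x * y⁻¹ * z * x⁻¹ * y = y⁻¹ * z * x⁻¹ * y * z := by
  have czx : Commute z x := hzx
  have czx' : z * x⁻¹ = x⁻¹ * z := czx.inv_right.eq
  calc x * y⁻¹ * z * x⁻¹ * y
      = x * y⁻¹ * (z * x⁻¹) * y := by group
    _ = x * y⁻¹ * (x⁻¹ * z) * y := by rw [czx']
    _ = (x * y⁻¹ * x⁻¹) * (z * y) := by group
    _ = (y⁻¹ * x⁻¹ * y) * (z * y) := by rw [braid_conj_inv x y hxy]
    _ = y⁻¹ * x⁻¹ * (y * z * y) := by group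
    _ = y⁻¹ * x⁻¹ * (z * y * z) := by rw [hyz]
    _ = y⁻¹ * (x⁻¹ * z) * (y * z) := by group
    _ = y⁻¹ * (z * x⁻¹) * (y * z) := by rw [← czx']
    _ = y⁻¹ * z * x⁻¹ * y * z := by group

/-- Relation `R_p`: `v⁻¹ p v = u⁻¹ p u p`. -/
lemma rel_Rp :
    (x * y * x⁻¹ * x⁻¹)⁻¹ * (z * x⁻¹) * (x * y * x⁻¹ * x⁻¹) =
      (y * x⁻¹)⁻¹ * (z * x⁻¹) * (y * x⁻¹) * (z * x⁻¹) := by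
  have czx : Commute z x := hzx
  have czx' : z * x⁻¹ = x⁻¹ * z := czx.inv_right.eq
  calc (x * y * x⁻¹ * x⁻¹)⁻¹ * (z * x⁻¹) * (x * y * x⁻¹ * x⁻¹)
      = x * x * y⁻¹ * (x⁻¹ * z) * y * (x⁻¹ * x⁻¹) := by
        simp only [mul_inv_rev, inv_inv, mul_assoc, inv_mul_cancel_left, mul_inv_cancel_left]
    _ = x * x * y⁻¹ * (z * x⁻¹) * y * (x⁻¹ * x⁻¹) := by rw [← czx']
    _ = x * (x * y⁻¹ * z * x⁻¹ * y) * (x⁻¹ * x⁻¹) := by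
        simp only [mul_inv_rev, inv_inv, mul_assoc, inv_mul_cancel_left, mul_inv_cancel_left]
    _ = x * (y⁻¹ * z * x⁻¹ * y * z) * (x⁻¹ * x⁻¹) := by rw [rel_core x y z hxy hyz hzx]
    _ = x * y⁻¹ * z * x⁻¹ * y * (z * x⁻¹) * x⁻¹ := by
        simp only [mul_inv_rev, inv_inv, mul_assoc, inv_mul_cancel_left, mul_inv_cancel_left]
    _ = x * y⁻¹ * z * x⁻¹ * y * (x⁻¹ * z) * x⁻¹ := by rw [czx']
    _ = (y * x⁻¹)⁻¹ * (z * x⁻¹) * (y * x⁻¹) * (z * x⁻¹) := by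
        simp only [mul_inv_rev, inv_inv, mul_assoc, inv_mul_cancel_left, mul_inv_cancel_left]

end

section
include hzw hzx hwx

/-- Relation `R_q`: `p q p = q p q`. -/
lemma rel_Rq :
    (z * x⁻¹) * (w * x⁻¹) * (z * x⁻¹) = (w * x⁻¹) * (z * x⁻¹) * (w * x⁻¹) := by
  have czx : Commute z x := hzx
  have cwx : Commute w x := hwx
  have hz' : x⁻¹ * z = z * x⁻¹ := czx.inv_right.symm.eq
  have hw' : x⁻¹ * w = w * x⁻¹ := cwx.inv_right.symm.eq
  have czx'' : z * x⁻¹ = x⁻¹ * z := czx.inv_right.eq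
  calc (z * x⁻¹) * (w * x⁻¹) * (z * x⁻¹)
      = z * (x⁻¹ * w) * x⁻¹ * z * x⁻¹ := by group
    _ = z * (w * x⁻¹) * x⁻¹ * z * x⁻¹ := by rw [hw']
    _ = z * w * x⁻¹ * (x⁻¹ * z) * x⁻¹ := by group
    _ = z * w * x⁻¹ * (z * x⁻¹) * x⁻¹ := by rw [hz']
    _ = z * w * (x⁻¹ * z) * x⁻¹ * x⁻¹ := by group
    _ = z * w * (z * x⁻¹) * x⁻¹ * x⁻¹ := by rw [hz']
    _ = (z * w * z) * (x⁻¹ * x⁻¹ * x⁻¹) := by group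
    _ = (w * z * w) * (x⁻¹ * x⁻¹ * x⁻¹) := by rw [hzw]
    _ = w * z * (w * x⁻¹) * (x⁻¹ * x⁻¹) := by group
    _ = w * z * (x⁻¹ * w) * (x⁻¹ * x⁻¹) := by rw [← hw']
    _ = w * (z * x⁻¹) * (w * x⁻¹) * x⁻¹ := by group
    _ = w * (z * x⁻¹) * (x⁻¹ * w) * x⁻¹ := by rw [← hw']
    _ = w * (z * x⁻¹) * x⁻¹ * (w * x⁻¹) := by group
    _ = w * (x⁻¹ * z) * x⁻¹ * (w * x⁻¹) := by rw [czx'']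
    _ = (w * x⁻¹) * (z * x⁻¹) * (w * x⁻¹) := by group

end

end Generic

/-! ### Swap permutation lemmas -/

section Swaps

variable {α : Type*} [DecidableEq α]

lemma swap_disjoint_commute {a b c d : α} (hac : a ≠ c) (had : a ≠ d)
    (hbc : b ≠ c) (hbd : b ≠ d) :
    Equiv.swap a b * Equiv.swap c d = Equiv.swap c d * Equiv.swap a b := by
  have hdisj : (Equiv.swap a b).Disjoint (Equiv.swap c d) := by
    rw [Equiv.Perm.disjoint_iff_eq_or_eq]
    intro t
    rcases eq_or_ne t a with rfl | hta
    · exact Or.inr (Equiv.swap_apply_of_ne_of_ne hac had)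
    rcases eq_or_ne t b with rfl | htb
    · exact Or.inr (Equiv.swap_apply_of_ne_of_ne hbc hbd)
    · exact Or.inl (Equiv.swap_apply_of_ne_of_ne hta htb)
  exact hdisj.commute.eq

lemma swap_braid {a b c : α} (hab : a ≠ b) (hbc : b ≠ c) (hac : a ≠ c) :
    Equiv.swap a b * Equiv.swap b c * Equiv.swap a b =
      Equiv.swap b c * Equiv.swap a b * Equiv.swap b c := by
  calc Equiv.swap a b * Equiv.swap b c * Equiv.swap a b
      = Equiv.swap b a * Equiv.swap c b * Equiv.swap b a := by
        rw [Equiv.swap_comm a b, Equiv.swap_comm b c]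
    _ = Equiv.swap a c := Equiv.swap_mul_swap_mul_swap hbc.symm hac.symm
    _ = Equiv.swap c a := Equiv.swap_comm a c
    _ = Equiv.swap b c * Equiv.swap a b * Equiv.swap b c :=
        (Equiv.swap_mul_swap_mul_swap hab hac).symm

end Swaps

/-! ### Basic lemmas about the braid group -/

namespace BraidAux

variable {n : ℕ}

/-- The generators of the braid group. -/
def σ (i : Fin (n - 1)) : PresentedGroup (braidRels n) := PresentedGroup.of i

lemma rel_one {r : FreeGroup (Fin (n - 1))} (h : r ∈ braidRels n) :
    PresentedGroup.mk (braidRels n) r = 1 :=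
  (QuotientGroup.eq_one_iff _).mpr (Subgroup.subset_normalClosure h)

lemma braid_comm (i j : Fin (n - 1)) (h : 1 < |(i : ℤ) - (j : ℤ)|) :
    σ i * σ j = σ j * σ i := by
  have h1 := rel_one (n := n) (Or.inl ⟨i, j, h, rfl⟩)
  rw [map_mul, map_inv, map_mul] at h1
  exact mul_inv_eq_one.mp h1

lemma braid_braid (i j : Fin (n - 1)) (h : |(i : ℤ) - (j : ℤ)| = 1) :
    σ i * σ j * σ i = σ j * σ i * σ j := by
  have h1 := rel_one (n := n) (Or.inr ⟨i, j, h, rfl⟩)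
  rw [map_mul, map_inv, map_mul, map_mul] at h1
  exact mul_inv_eq_one.mp h1

/-- The permutation representation generators. -/
def sgen (n : ℕ) (i : Fin (n - 1)) : Equiv.Perm (Fin n) :=
  Equiv.swap ⟨i.1, by have := i.2; omega⟩ ⟨i.1 + 1, by have := i.2; omega⟩

lemma perm_rels (n : ℕ) : ∀ r ∈ braidRels n, FreeGroup.lift (sgen n) r = 1 := by
  rintro r (⟨i, j, hij, rfl⟩ | ⟨i, j, hij, rfl⟩) <;>
    simp only [map_mul, map_inv, FreeGroup.lift_apply_of] <;> rw [mul_inv_eq_one]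
  · rcases lt_abs.mp hij with h | h
    all_goals
      exact swap_disjoint_commute
        (by simp only [ne_eq, Fin.mk.injEq]; omega)
        (by simp only [ne_eq, Fin.mk.injEq]; omega)
        (by simp only [ne_eq, Fin.mk.injEq]; omega)
        (by simp only [ne_eq, Fin.mk.injEq]; omega)
  · rcases (abs_eq (by norm_num : (0:ℤ) ≤ 1)).mp hij with h | h
    · -- i = j + 1
      have e : sgen n i =
          Equiv.swap ⟨j.1 + 1, by have := j.2; omega⟩ ⟨j.1 + 2, by have := i.2; omega⟩ := by
        unfold sgen
        congr 1 <;> exact Fin.ext (by simp; omega)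
      rw [e]
      show Equiv.swap _ _ * sgen n j * Equiv.swap _ _ = sgen n j * _ * sgen n j
      unfold sgen
      exact (swap_braid
        (by simp only [ne_eq, Fin.mk.injEq]; omega)
        (by simp only [ne_eq, Fin.mk.injEq]; omega)
        (by simp only [ne_eq, Fin.mk.injEq]; omega)).symm
    · -- j = i + 1
      have e : sgen n j =
          Equiv.swap ⟨i.1 + 1, by have := i.2; omega⟩ ⟨i.1 + 2, by have := j.2; omega⟩ := by
        unfold sgen
        congr 1 <;> exact Fin.ext (by simp; omega)
      rw [e]
      show sgen n i * Equiv.swap _ _ * sgen n i = Equiv.swap _ _ * sgen n i * Equiv.swap _ _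
      unfold sgen
      exact swap_braid
        (by simp only [ne_eq, Fin.mk.injEq]; omega)
        (by simp only [ne_eq, Fin.mk.injEq]; omega)
        (by simp only [ne_eq, Fin.mk.injEq]; omega)

/-- The permutation representation of the braid group. -/
def ρ (n : ℕ) : PresentedGroup (braidRels n) →* Equiv.Perm (Fin n) :=
  PresentedGroup.toGroup (perm_rels n)

lemma ρ_of (i : Fin (n - 1)) : ρ n (σ i) = sgen n i :=
  PresentedGroup.toGroup.of (perm_rels n)

end BraidAux

/-- for every `n ≥ 5`, the braid group `B_n` is not locally
indicable: it has a nontrivial finitely generated subgroup admitting no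
surjection onto `ℤ`. -/
theorem braidGroup_not_locallyIndicable (n : ℕ) (hn : 5 ≤ n) :
    ∃ H : Subgroup (BraidGroup n), H.FG ∧ H ≠ ⊥ ∧
      ∀ φ : H →* Multiplicative ℤ, ¬ Function.Surjective φ := by
  classical
  show ∃ H : Subgroup (PresentedGroup (braidRels n)), H.FG ∧ H ≠ ⊥ ∧
    ∀ φ : H →* Multiplicative ℤ, ¬ Function.Surjective φ
  -- the four generators σ₀, σ₁, σ₂, σ₃
  have h0 : (0 : ℕ) < n - 1 := by omega
  have h1 : (1 : ℕ) < n - 1 := by omega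
  have h2 : (2 : ℕ) < n - 1 := by omega
  have h3 : (3 : ℕ) < n - 1 := by omega
  set i0 : Fin (n - 1) := ⟨0, h0⟩ with hi0
  set i1 : Fin (n - 1) := ⟨1, h1⟩ with hi1
  set i2 : Fin (n - 1) := ⟨2, h2⟩ with hi2
  set i3 : Fin (n - 1) := ⟨3, h3⟩ with hi3
  set x : PresentedGroup (braidRels n) := BraidAux.σ i0 with hxdef
  set y : PresentedGroup (braidRels n) := BraidAux.σ i1 with hydef
  set z : PresentedGroup (braidRels n) := BraidAux.σ i2 with hzdef
  set w : PresentedGroup (braidRels n) := BraidAux.σ i3 with hwdef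
  have hxy : x * y * x = y * x * y := BraidAux.braid_braid i0 i1 (by simp [hi0, hi1])
  have hyz : y * z * y = z * y * z := BraidAux.braid_braid i1 i2 (by simp [hi1, hi2])
  have hzw : z * w * z = w * z * w := BraidAux.braid_braid i2 i3 (by simp [hi2, hi3])
  have hzx : z * x = x * z := BraidAux.braid_comm i2 i0 (by simp [hi0, hi2])
  have hwx : w * x = x * w := BraidAux.braid_comm i3 i0 (by simp [hi0, hi3])
  have hwy : w * y = y * w := BraidAux.braid_comm i3 i1 (by simp [hi1, hi3])
  -- the four subgroup generators
  set u : PresentedGroup (braidRels n) := y * x⁻¹ with hudef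
  set v : PresentedGroup (braidRels n) := x * y * x⁻¹ * x⁻¹ with hvdef
  set p : PresentedGroup (braidRels n) := z * x⁻¹ with hpdef
  set q : PresentedGroup (braidRels n) := w * x⁻¹ with hqdef
  have Ru : v * q⁻¹ * v⁻¹ * q = u := rel_Ru x y w hxy hwx hwy
  have Rv : q * u⁻¹ * q⁻¹ * u = v := rel_Rv x y w hxy hwx hwy
  have Rp : v⁻¹ * p * v = u⁻¹ * p * u * p := rel_Rp x y z hxy hyz hzx
  have Rq : p * q * p = q * p * q := rel_Rq x z w hzw hzx hwx
  -- the subgroup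
  refine ⟨Subgroup.closure {u, v, p, q}, ?_, ?_, ?_⟩
  · exact (Subgroup.fg_iff _).mpr ⟨{u, v, p, q}, rfl, Set.toFinite _⟩
  · -- nontrivial: u maps to a nontrivial permutation
    intro hbot
    have humem : u ∈ Subgroup.closure {u, v, p, q} :=
      Subgroup.subset_closure (by simp)
    rw [hbot, Subgroup.mem_bot] at humem
    have hρ : BraidAux.ρ n u = 1 := by rw [humem, map_one]
    have hn0 : (0 : ℕ) < n := by omega
    have hn1 : (1 : ℕ) < n := by omega
    have hn2 : (2 : ℕ) < n := by omega
    set a0 : Fin n := ⟨0, hn0⟩ with ha0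
    set a1 : Fin n := ⟨1, hn1⟩ with ha1
    set a2 : Fin n := ⟨2, hn2⟩ with ha2
    have s0 : BraidAux.sgen n i0 = Equiv.swap a0 a1 := by
      rw [hi0, ha0, ha1]; unfold BraidAux.sgen
      congr 1
    have s1 : BraidAux.sgen n i1 = Equiv.swap a1 a2 := by
      rw [hi1, ha1, ha2]; unfold BraidAux.sgen
      congr 1
    have happ : BraidAux.ρ n u a0 = a2 := by
      rw [hudef, map_mul, map_inv, hxdef, hydef, BraidAux.ρ_of, BraidAux.ρ_of, s0, s1,
        Equiv.swap_inv, Equiv.Perm.mul_apply, Equiv.swap_apply_left, Equiv.swap_apply_left]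
    rw [hρ] at happ
    have : a0 = a2 := happ
    rw [ha0, ha2] at this
    have h02 := congrArg Fin.val this
    simp at h02
  · -- no surjection onto ℤ
    intro φ hsurj
    have humem : u ∈ Subgroup.closure ({u, v, p, q} : Set (PresentedGroup (braidRels n))) :=
      Subgroup.subset_closure (by simp)
    have hvmem : v ∈ Subgroup.closure ({u, v, p, q} : Set (PresentedGroup (braidRels n))) :=
      Subgroup.subset_closure (by simp)
    have hpmem : p ∈ Subgroup.closure ({u, v, p, q} : Set (PresentedGroup (braidRels n))) :=
      Subgroup.subset_closure (by simp)
    have hqmem : q ∈ Subgroup.closure ({u, v, p, q} : Set (PresentedGroup (braidRels n))) :=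
      Subgroup.subset_closure (by simp)
    let uH : Subgroup.closure ({u, v, p, q} : Set (PresentedGroup (braidRels n))) := ⟨u, humem⟩
    let vH : Subgroup.closure ({u, v, p, q} : Set (PresentedGroup (braidRels n))) := ⟨v, hvmem⟩
    let pH : Subgroup.closure ({u, v, p, q} : Set (PresentedGroup (braidRels n))) := ⟨p, hpmem⟩
    let qH : Subgroup.closure ({u, v, p, q} : Set (PresentedGroup (braidRels n))) := ⟨q, hqmem⟩
    have EU : uH = vH * qH⁻¹ * vH⁻¹ * qH := Subtype.ext Ru.symm
    have EV : vH = qH * uH⁻¹ * qH⁻¹ * uH := Subtype.ext Rv.symm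
    have EP : vH⁻¹ * pH * vH = uH⁻¹ * pH * uH * pH := Subtype.ext Rp
    have EQ : pH * qH * pH = qH * pH * qH := Subtype.ext Rq
    have hcomm : ∀ a b : Multiplicative ℤ, a * b⁻¹ * a⁻¹ * b = 1 := fun a b => by
      rw [mul_comm a b⁻¹]; group
    have hφu : φ uH = 1 := by
      rw [EU, map_mul, map_mul, map_mul, map_inv, map_inv]; exact hcomm _ _
    have hφv : φ vH = 1 := by
      rw [EV, map_mul, map_mul, map_mul, map_inv, map_inv]; exact hcomm _ _
    have hφp : φ pH = 1 := by
      have h := congrArg φ EP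
      simp only [map_mul, map_inv, hφu, hφv, inv_one, one_mul, mul_one] at h
      exact (mul_eq_left.mp h.symm)
    have hφq : φ qH = 1 := by
      have h := congrArg φ EQ
      simp only [map_mul, hφp, one_mul, mul_one] at h
      exact (mul_eq_left.mp h.symm)
    have hall : ∀ g : Subgroup.closure ({u, v, p, q} : Set (PresentedGroup (braidRels n))),
        φ g = 1 := by
      rintro ⟨g, hg⟩
      refine Subgroup.closure_induction
        (p := fun g hg => φ ⟨g, hg⟩ = 1) ?_ ?_ ?_ ?_ hg
      · rintro s hs
        rcases hs with rfl | rfl | rfl | rfl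
        · exact hφu
        · exact hφv
        · exact hφp
        · exact hφq
      · show φ 1 = 1; exact map_one φ
      · intro a b ha hb pa pb
        show φ (⟨a, ha⟩ * ⟨b, hb⟩) = 1
        rw [map_mul, pa, pb, mul_one]
      · intro a ha pa
        show φ (⟨a, ha⟩)⁻¹ = 1
        rw [map_inv, pa, inv_one]
    obtain ⟨g, hg⟩ := hsurj (Multiplicative.ofAdd 1)
    rw [hall g] at hg
    exact one_ne_zero (Multiplicative.ofAdd.injective hg.symm)
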